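/- Let L₀ ⊆ L be first-order languages such that every symbol of L not in L₀ is a relation symbol. Let K be a λ-bounded strong Fraïssé class of L-structures whose class of reducts K↾L₀ is a strong Fraïssé class, and suppose K has the extended strong amalgamation property over L₀. Let M₀ be an L₀-structure satisfying the semantic λ-Fraïssé theory of K↾L₀. Then for every A ∈ K, the set D_A = {B ∈ K[M₀] : A embeds into B} is dense in the poset Fn_{M₀}(K, λ): for every C ∈ K[M₀] there is B ∈ K[M₀] with C ⊆ B and an embedding of A into B. -/

import Mathlib

open FirstOrder FirstOrder.Language Set Cardinal

universe u

noncomputable section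

/-- A condition over `M₀`: an `L`-structure whose reduct to `L₀` (along `φ : L₀ →ᴸ L`) is a
substructure of the `L₀`-structure `M₀`. -/
structure Cond {L₀ L : FirstOrder.Language.{u, u}} (φ : L₀ →ᴸ L) (M₀ : Type u)
    [L₀.Structure M₀] : Type u where
  carrier : L₀.Substructure M₀
  str : L.Structure carrier
  reduct_eq : @FirstOrder.Language.LHom.reduct L₀ L φ carrier str =
    FirstOrder.Language.Substructure.inducedStructure

variable {L₀ L : FirstOrder.Language.{u, u}} {φ : L₀ →ᴸ L} {M₀ : Type u} [L₀.Structure M₀]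

/-- The bundled `L`-structure underlying a condition. -/
def Cond.bundled (A : Cond φ M₀) : CategoryTheory.Bundled.{u} L.Structure :=
  ⟨A.carrier, A.str⟩

/-- `A` is a substructure of `B`: the inclusion of underlying sets is an `L`-embedding. -/
def Cond.le (A B : Cond φ M₀) : Prop :=
  ∃ f : @FirstOrder.Language.Embedding L A.carrier B.carrier A.str B.str,
    ∀ x : A.carrier, (f x : M₀) = (x : M₀)

/-- A strong Fraïssé class: closed under isomorphism, with the hereditary, joint embedding,
amalgamation, and strong (disjoint) amalgamation properties. -/
structure IsStrongFraisseClass {L' : FirstOrder.Language.{u, u}}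
    (K : Set (CategoryTheory.Bundled.{u} L'.Structure)) : Prop where
  isoClosed : ∀ A B : CategoryTheory.Bundled.{u} L'.Structure,
    Nonempty (A ≃[L'] B) → A ∈ K → B ∈ K
  hereditary : ∀ A : CategoryTheory.Bundled.{u} L'.Structure, A ∈ K →
    ∀ S : L'.Substructure A,
      (⟨(S : Type u), inferInstance⟩ : CategoryTheory.Bundled.{u} L'.Structure) ∈ K
  jep : ∀ A ∈ K, ∀ B ∈ K, ∃ C ∈ K, Nonempty (A ↪[L'] C) ∧ Nonempty (B ↪[L'] C)
  ap : ∀ (A B C : CategoryTheory.Bundled.{u} L'.Structure) (i₁ : A ↪[L'] B) (i₂ : A ↪[L'] C),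
    A ∈ K → B ∈ K → C ∈ K →
      ∃ (D : CategoryTheory.Bundled.{u} L'.Structure) (j₁ : B ↪[L'] D) (j₂ : C ↪[L'] D),
        D ∈ K ∧ j₁.comp i₁ = j₂.comp i₂
  sap : ∀ (A B C : CategoryTheory.Bundled.{u} L'.Structure) (i₁ : A ↪[L'] B) (i₂ : A ↪[L'] C),
    A ∈ K → B ∈ K → C ∈ K →
      ∃ (D : CategoryTheory.Bundled.{u} L'.Structure) (j₁ : B ↪[L'] D) (j₂ : C ↪[L'] D),
        D ∈ K ∧ j₁.comp i₁ = j₂.comp i₂ ∧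
          Set.range j₁ ∩ Set.range j₂ = Set.range (j₁.comp i₁)

/-- Every member of `K` is generated by a set of size `< λ` (`K` is `λ`-bounded). -/
def IsBounded {L' : FirstOrder.Language.{u, u}}
    (K : Set (CategoryTheory.Bundled.{u} L'.Structure)) (lam : Cardinal.{u}) : Prop :=
  ∀ A : CategoryTheory.Bundled.{u} L'.Structure, A ∈ K →
    ∃ s : Set A, #s < lam ∧ Substructure.closure L' s = ⊤

/-- The reduct of a bundled `L`-structure along `φ : L₀ →ᴸ L`. -/
def reductBundled (φ : L₀ →ᴸ L) (A : CategoryTheory.Bundled.{u} L.Structure) :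
    CategoryTheory.Bundled.{u} L₀.Structure :=
  ⟨A, @FirstOrder.Language.LHom.reduct L₀ L φ A A.str⟩

/-- The class of reducts (up to isomorphism) of members of `K`: `K↾L₀`. -/
def KBot (φ : L₀ →ᴸ L) (K : Set (CategoryTheory.Bundled.{u} L.Structure)) :
    Set (CategoryTheory.Bundled.{u} L₀.Structure) :=
  {X | ∃ A ∈ K, Nonempty (X ≃[L₀] reductBundled φ A)}

/-- `K` has the extended strong amalgamation property over `L₀`: any strong amalgamation
prescribed at the level of `L₀`-structures can be expanded to one in `K`. -/
def ExtendedSAP (φ : L₀ →ᴸ L) (K : Set (CategoryTheory.Bundled.{u} L.Structure)) : Prop :=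
  ∀ (D : Type u) [L₀.Structure D],
    (⟨D, inferInstance⟩ : CategoryTheory.Bundled.{u} L₀.Structure) ∈ KBot φ K →
    ∀ A B C : Cond φ D, A.bundled ∈ K → B.bundled ∈ K → C.bundled ∈ K →
      A.le B → A.le C →
      ((B.carrier : Set D) ∩ (C.carrier : Set D) = (A.carrier : Set D)) →
      Substructure.closure L₀ ((B.carrier : Set D) ∪ (C.carrier : Set D)) = ⊤ →
      ∃ D' : Cond φ D, D'.bundled ∈ K ∧ D'.carrier = ⊤ ∧ B.le D' ∧ C.le D'

/-- Every function symbol of `L` comes from `L₀`, i.e. `L ∖ L₀` is relational. -/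
def ComplementRelational (φ : L₀ →ᴸ L) : Prop :=
  ∀ n, Function.Surjective (fun f : L₀.Functions n => φ.onFunction f)

/-- Same quantifier-free type. -/
def SameQfType (L' : FirstOrder.Language.{u, u}) {ι : Type*} {M N : Type u}
    [L'.Structure M] [L'.Structure N] (a : ι → M) (b : ι → N) : Prop :=
  ∀ ψ : L'.Formula ι, ψ.IsQF → (ψ.Realize a ↔ ψ.Realize b)

/-- `M` satisfies the semantic `λ`-Fraïssé theory of a class `KB` of `L₀`-structures:
(1) every generating tuple (of size `< λ`) of a member of `KB` is realized in `M` up to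
quantifier-free type; (2) the corresponding extension property holds. -/
def SatisfiesFraisseTheory (KB : Set (CategoryTheory.Bundled.{u} L₀.Structure))
    (M : Type u) [L₀.Structure M] (lam : Cardinal.{u}) : Prop :=
  (∀ X : CategoryTheory.Bundled.{u} L₀.Structure, X ∈ KB →
    ∀ (ι : Type u), #ι < lam → ∀ x : ι → X,
      Substructure.closure L₀ (Set.range x) = ⊤ → ∃ c : ι → M, SameQfType L₀ x c) ∧
  (∀ Y : CategoryTheory.Bundled.{u} L₀.Structure, Y ∈ KB →
    ∀ (ι ι' : Type u), #ι < lam → #ι' < lam → ∀ (x : ι → Y) (y : ι' → Y),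
      (⟨((Substructure.closure L₀ (Set.range x) : L₀.Substructure Y) : Type u), inferInstance⟩ :
        CategoryTheory.Bundled.{u} L₀.Structure) ∈ KB →
      Substructure.closure L₀ (Set.range x ∪ Set.range y) = ⊤ →
      ∀ c : ι → M, SameQfType L₀ x c →
        ∃ d : ι' → M, SameQfType L₀ (Sum.elim x y) (Sum.elim c d))



section MyHelpers

variable {L' : FirstOrder.Language.{u, u}}

theorem sameQfType_realize_term' {ι : Type u} {M N : Type u} [L'.Structure M] [L'.Structure N]
    {a : ι → M} {b : ι → N} (h : SameQfType L' a b) (t₁ t₂ : L'.Term ι) :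
    t₁.realize a = t₂.realize a ↔ t₁.realize b = t₂.realize b := by
  have := h (t₁.equal t₂) (BoundedFormula.IsAtomic.equal _ _).isQF
  simpa using this

theorem sameQfType_comp_embedding' {ι : Type u} {M N : Type u} [L'.Structure M] [L'.Structure N]
    (g : M ↪[L'] N) (a : ι → M) : SameQfType L' a (⇑g ∘ a) := by
  intro ψ hψ
  have := hψ.realize_embedding g (v := a) (xs := (default : Fin 0 → M))
  rw [Subsingleton.elim (⇑g ∘ (default : Fin 0 → M)) default] at this
  exact this.symm

theorem exists_embedding_of_sameQfType' {ι : Type u} {M N : Type u} [L'.Structure M]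
    [L'.Structure N] {a : ι → M} {b : ι → N} (h : SameQfType L' a b)
    (hgen : Substructure.closure L' (Set.range a) = ⊤) :
    ∃ g : M ↪[L'] N, ∀ t : L'.Term ι, g (t.realize a) = t.realize b := by
  have hterm : ∀ x : M, ∃ t : L'.Term ι, t.realize a = x := by
    intro x
    have hx : x ∈ Substructure.closure L' (Set.range a) := hgen ▸ Substructure.mem_top x
    rw [Substructure.mem_closure_iff_exists_term] at hx
    obtain ⟨t, ht⟩ := hx
    refine ⟨t.relabel (fun s => s.2.choose), ?_⟩
    rw [Term.realize_relabel, ← ht]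
    congr 1
    funext s
    exact s.2.choose_spec
  choose T hT using hterm
  refine ⟨⟨⟨fun x => (T x).realize b, ?_⟩, ?_, ?_⟩, ?_⟩
  · intro x y hxy
    rw [← hT x, ← hT y]
    exact (sameQfType_realize_term' h (T x) (T y)).mpr hxy
  · intro n f xs
    show (T (Structure.funMap f xs)).realize b = Structure.funMap f (fun i => (T (xs i)).realize b)
    have h1 : (Term.func f (fun i => T (xs i))).realize a = Structure.funMap f xs := by
      simp [Term.realize, hT]
    have := (sameQfType_realize_term' h (T (Structure.funMap f xs))
      (Term.func f (fun i => T (xs i)))).mp (by rw [hT, h1])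
    rw [this]
    simp [Term.realize]
  · intro n r xs
    have := h (r.formula (fun i => T (xs i))) (BoundedFormula.IsAtomic.rel _ _).isQF
    rw [Formula.realize_rel, Formula.realize_rel] at this
    simp only [hT] at this
    exact this.symm
  · intro t
    exact (sameQfType_realize_term' h (T (t.realize a)) t).mp (hT _)

end MyHelpers

section MyHelpers2

/-- Reduct of an embedding along `φ`. -/
def reductEmb' {M N : Type u} [iM : L.Structure M] [iN : L.Structure N] (f : M ↪[L] N) :
    @FirstOrder.Language.Embedding L₀ M N (φ.reduct M) (φ.reduct N) :=
  letI := φ.reduct M; letI := φ.reduct N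
  { toFun := f, inj' := f.injective,
    map_fun' := fun {_} f₀ xs => f.map_fun (φ.onFunction f₀) xs,
    map_rel' := fun {_} r xs => f.map_rel (φ.onRelation r) xs }

@[simp] theorem reductEmb'_apply {M N : Type u} [L.Structure M] [L.Structure N]
    (f : M ↪[L] N) (x : M) : reductEmb' (φ := φ) f x = f x := rfl

/-- Carriers of the `L₀`-closure (in the reduct) and the `L`-closure agree when `L ∖ L₀` is
relational. -/
theorem closure_reduct_carrier' (hrel : ComplementRelational φ) {N : Type u} [iN : L.Structure N]
    (s : Set N) :
    ((@Substructure.closure L₀ N (φ.reduct N) s :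
        @FirstOrder.Language.Substructure L₀ N (φ.reduct N)) : Set N)
      = (Substructure.closure L s : Set N) := by
  letI := φ.reduct N
  apply le_antisymm
  · have hle : Substructure.closure L₀ s ≤ φ.substructureReduct (Substructure.closure L s) :=
      (Substructure.closure_le).2 Substructure.subset_closure
    exact hle
  · let S : L.Substructure N :=
      { carrier := (Substructure.closure L₀ s : Set N)
        fun_mem := by
          intro n f xs hxs
          obtain ⟨f₀, rfl⟩ := hrel n f
          exact (Substructure.closure L₀ s).fun_mem f₀ xs hxs }
    exact (Substructure.closure_le (S := S)).2 Substructure.subset_closure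

/-- Equality of structures from componentwise equality. -/
theorem Structure.ext'' {L' : FirstOrder.Language.{u,u}} {M : Type u} (S T : L'.Structure M)
    (hf : ∀ (n : ℕ) (f : L'.Functions n) (xs : Fin n → M),
      @Structure.funMap L' M S n f xs = @Structure.funMap L' M T n f xs)
    (hr : ∀ (n : ℕ) (r : L'.Relations n) (xs : Fin n → M),
      @Structure.RelMap L' M S n r xs ↔ @Structure.RelMap L' M T n r xs) : S = T := by
  obtain ⟨Sf, Sr⟩ := S; obtain ⟨Tf, Tr⟩ := T
  congr
  · funext n f xs; exact hf n f xs
  · funext n r xs; exact propext (hr n r xs)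

/-- Transporting a structure along (the underlying function of) a first-order equivalence gives
back the structure on the codomain. -/
theorem inducedStructure_eq_of_equiv {L' : FirstOrder.Language.{u,u}} {P Q : Type u}
    [L'.Structure P] [iQ : L'.Structure Q] (q : P ≃[L'] Q) :
    @Equiv.inducedStructure L' P Q _ q.toEquiv = iQ := by
  apply Structure.ext''
  · intro n f xs
    show q (Structure.funMap f (⇑q.toEquiv.symm ∘ xs)) = Structure.funMap f xs
    rw [q.map_fun]
    congr 1
    funext i
    exact q.apply_symm_apply (xs i)
  · intro n r xs
    show Structure.RelMap r (⇑q.toEquiv.symm ∘ xs) ↔ Structure.RelMap r xs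
    have h3 := q.map_rel r (⇑q.toEquiv.symm ∘ xs)
    rw [show ⇑q ∘ ⇑q.toEquiv.symm ∘ xs = xs from
      funext fun i => q.apply_symm_apply (xs i)] at h3
    exact h3.symm

end MyHelpers2

/-- If `K` is a `λ`-bounded strong Fraïssé class with `K↾L₀` strong Fraïssé
and the extended strong amalgamation property over `L₀`, and `M₀` satisfies the semantic
`λ`-Fraïssé theory of `K↾L₀`, then for every `A ∈ K` the set `D_A` of conditions into which
`A` embeds is dense in `Fn_{M₀}(K, λ)`: every `C ∈ K[M₀]` has an extension `B ∈ K[M₀]` into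
which `A` embeds. -/
theorem embedding_dense {L₀ L : FirstOrder.Language.{u, u}} (φ : L₀ →ᴸ L)
    (hsub : φ.Injective) (hrel : ComplementRelational φ)
    (lam : Cardinal.{u})
    (K : Set (CategoryTheory.Bundled.{u} L.Structure))
    (hK : IsStrongFraisseClass K) (hbdd : IsBounded K lam)
    (hKbot : IsStrongFraisseClass (KBot φ K))
    (hesap : ExtendedSAP φ K)
    (M₀ : Type u) [L₀.Structure M₀]
    (hM₀ : SatisfiesFraisseTheory (KBot φ K) M₀ lam)
    (A : CategoryTheory.Bundled.{u} L.Structure) (hA : A ∈ K)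
    (C : Cond φ M₀) (hC : C.bundled ∈ K) :
    ∃ B : Cond φ M₀, B.bundled ∈ K ∧ C.le B ∧
      Nonempty (@FirstOrder.Language.Embedding L A B.carrier A.str B.str) := by
  classical
  obtain ⟨E, hE, ⟨f⟩, ⟨g⟩⟩ := hK.jep C.bundled hC A hA
  obtain ⟨sC, hsCcard, hsCcl⟩ := hbdd C.bundled hC
  obtain ⟨sE, hsEcard, hsEcl⟩ := hbdd E hE
  letI iE0 : L₀.Structure E := (reductBundled φ E).str
  letI iC0 : L₀.Structure C.bundled := (reductBundled φ C.bundled).str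
  have hYmem : reductBundled φ E ∈ KBot φ K :=
    ⟨E, hE, ⟨FirstOrder.Language.Equiv.refl L₀ (reductBundled φ E)⟩⟩
  -- the tuples
  let x : sC → (E : Type u) := fun i => f i.1
  let y : sE → (E : Type u) := fun j => j.1
  have hxrange : Set.range x = ⇑f '' sC := by
    ext z
    simp [x, Set.mem_image]
  have hyrange : Set.range y = sE := Subtype.range_coe
  -- the reduct embedding of f
  let fbot := reductEmb' (φ := φ) f
  -- the L-closure of range x
  have hLcl : Substructure.closure L (Set.range x) = f.toHom.range := by
    have h0 : Set.range x = ⇑f.toHom '' sC := by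
      ext z
      simp [x, Set.mem_image]
    rw [h0, Substructure.closure_image, hsCcl, ← Hom.range_eq_map]
  have hsub_eq : Substructure.closure L₀ (Set.range x) = fbot.toHom.range := by
    apply SetLike.ext'
    refine (closure_reduct_carrier' (φ := φ) hrel (Set.range x)).trans ?_
    rw [hLcl]
    ext z
    constructor
    · rintro ⟨w, rfl⟩
      exact ⟨w, rfl⟩
    · rintro ⟨w, rfl⟩
      exact ⟨w, rfl⟩
  have hclmem : (⟨((Substructure.closure L₀ (Set.range x) :
        FirstOrder.Language.Substructure L₀ E) : Type u), inferInstance⟩ :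
        CategoryTheory.Bundled.{u} L₀.Structure) ∈ KBot φ K := by
    refine Set.mem_of_eq_of_mem
      (congrArg (fun S : FirstOrder.Language.Substructure L₀ E =>
        (⟨(S : Type u), inferInstance⟩ : CategoryTheory.Bundled.{u} L₀.Structure)) hsub_eq) ?_
    exact ⟨C.bundled, hC, ⟨fbot.equivRange.symm⟩⟩
  -- generation
  have hLclU : Substructure.closure L (Set.range x ∪ Set.range y) = ⊤ := by
    rw [eq_top_iff, ← hsEcl]
    refine Substructure.closure_mono ?_
    intro z hz
    refine Set.mem_union_right _ ?_
    rw [hyrange]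
    exact hz
  have hgen2 : Substructure.closure L₀ (Set.range x ∪ Set.range y) = ⊤ := by
    apply SetLike.ext'
    refine (closure_reduct_carrier' (φ := φ) hrel _).trans ?_
    rw [hLclU]
    rfl
  -- the tuple c in M₀ and the inclusion of C into M₀ as an L₀-embedding of the reduct
  obtain ⟨inclM, hinclM⟩ : ∃ j : @FirstOrder.Language.Embedding L₀ C.carrier M₀
      (@FirstOrder.Language.LHom.reduct L₀ L φ C.carrier C.str) _,
      ∀ v : C.carrier, j v = (v : M₀) := by
    rw [C.reduct_eq]
    exact ⟨Substructure.subtype C.carrier, fun v => rfl⟩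
  let c : sC → M₀ := fun i => inclM (i.1 : (C.carrier : Type u))
  have hxc : SameQfType L₀ x c := by
    have h1 : SameQfType L₀ (fun i : sC => (i.1 : (C.bundled : Type u))) x :=
      @sameQfType_comp_embedding' L₀ sC (C.bundled : Type u) (E : Type u)
        (φ.reduct (C.bundled : Type u)) (φ.reduct (E : Type u)) fbot (fun i : sC => i.1)
    have h2 : SameQfType L₀ (fun i : sC => (i.1 : (C.bundled : Type u))) c :=
      @sameQfType_comp_embedding' L₀ sC (C.carrier : Type u) M₀
        (@FirstOrder.Language.LHom.reduct L₀ L φ C.carrier C.str) _ inclM (fun i : sC => i.1)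
    exact fun ψ hψ => (h1 ψ hψ).symm.trans (h2 ψ hψ)
  -- apply the extension property
  obtain ⟨d, hd⟩ := hM₀.2 (reductBundled φ E) hYmem sC sE hsCcard hsEcard x y hclmem hgen2 c hxc
  have hgenSum : Substructure.closure L₀ (Set.range (Sum.elim x y)) = ⊤ := by
    rw [Set.Sum.elim_range]
    exact hgen2
  obtain ⟨h, hh⟩ := exists_embedding_of_sameQfType' hd hgenSum
  have hhx : ∀ i : sC, h (x i) = c i := fun i => hh (Term.var (Sum.inl i))
  -- build the condition B
  letI iE1 : L.Structure ((reductBundled φ E : CategoryTheory.Bundled.{u} L₀.Structure) :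
    Type u) := E.str
  let strB : L.Structure h.toHom.range := Equiv.inducedStructure (L := L) h.equivRange.toEquiv
  have hred : @FirstOrder.Language.LHom.reduct L₀ L φ h.toHom.range strB =
      Substructure.inducedStructure := by
    have e1 : @FirstOrder.Language.LHom.reduct L₀ L φ h.toHom.range strB
        = @Equiv.inducedStructure L₀ _ _ _ h.equivRange.toEquiv := rfl
    rw [e1]
    exact inducedStructure_eq_of_equiv h.equivRange
  let B : Cond φ M₀ := ⟨h.toHom.range, strB, hred⟩
  let eL := Equiv.inducedStructureEquiv (L := L) h.equivRange.toEquiv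
  have hBK : B.bundled ∈ K := hK.isoClosed E B.bundled ⟨eL⟩ hE
  -- pointwise identity of the embedding of C into B
  have hgenC : Substructure.closure L₀ (M := (C.bundled : Type u)) sC = ⊤ := by
    apply SetLike.ext'
    refine (closure_reduct_carrier' (φ := φ) hrel sC).trans ?_
    rw [hsCcl]
    rfl
  have heq : (h.toHom.comp fbot.toHom) = @FirstOrder.Language.Embedding.toHom L₀ C.carrier M₀
      (@FirstOrder.Language.LHom.reduct L₀ L φ C.carrier C.str) _ inclM := by
    apply Hom.eq_of_eqOn_dense hgenC
    intro v hv
    show h (fbot v) = inclM v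
    exact hhx ⟨v, hv⟩
  have hpt : ∀ v : (C.bundled : Type u), h (f v) = inclM v := fun v => DFunLike.congr_fun heq v
  letI iCL : L.Structure (C.carrier : Type u) := C.str
  refine ⟨B, hBK, ⟨eL.toEmbedding.comp f, ?_⟩, ⟨eL.toEmbedding.comp g⟩⟩
  intro v
  show ((h.equivRange (f v) : h.toHom.range) : M₀) = (v : M₀)
  show h (f v) = (v : M₀)
  rw [hpt v]
  exact hinclM v

end
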